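/- For a > 0 define v_a : ℝ → ℝ by v_a(x) = 2·arctan(x/a). Let n ≥ 1, let K, L ≥ 0 be natural numbers, let α > 0, ε ∈ {0,1}, a_1,…,a_K > 0 and b_1,…,b_L > 0, and let μ = (μ_1,…,μ_n) ∈ ℤ^n with μ_1 > μ_2 > … > μ_n > 0. If ξ = (ξ_1,…,ξ_n) ∈ ℝ^n satisfies, for every j ∈ {1,…,n}, the equation 2α ξ_j + Σ_{k=1}^K v_{a_k}(ξ_j) + Σ_{j′≠j} Σ_{l=1}^L ( v_{b_l}(ξ_{j′} + ξ_j) − v_{b_l}(ξ_{j′} − ξ_j) ) = 2π(μ_j + ε/2), then for all 1 ≤ j ≤ n one has π(μ_j + ε/2)/(α + κ₋) ≤ ξ_j ≤ π(μ_j + ε/2)/α, and for all 1 ≤ j < j′ ≤ n one has π(μ_j − μ_{j′})/(α + κ₋) ≤ ξ_j − ξ_{j′} ≤ π(μ_j − μ_{j′})/α, where κ₋ = Σ_{k=1}^K a_k^{−1} + 2(n−1) Σ_{l=1}^L b_l^{−1}. In particular ξ_1 > ξ_2 > … > ξ_n > 0. -/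

import Mathlib

open Real Finset

/-- The rational function `v_a(x) = 2 arctan(x/a)`. -/
noncomputable def vRat (a x : ℝ) : ℝ := 2 * Real.arctan (x / a)

lemma arctan_lipschitz : LipschitzWith 1 Real.arctan := by
  apply lipschitzWith_of_nnnorm_deriv_le Real.differentiable_arctan
  intro x
  rw [Real.deriv_arctan]
  rw [← NNReal.coe_le_coe, coe_nnnorm, Real.norm_eq_abs, NNReal.coe_one,
    abs_of_nonneg (by positivity)]
  rw [div_le_one (by positivity)]
  nlinarith [sq_nonneg x]

lemma vRat_mono {a : ℝ} (ha : 0 < a) {x y : ℝ} (h : x ≤ y) : vRat a x ≤ vRat a y := by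
  unfold vRat
  have : x / a ≤ y / a := by gcongr
  have := Real.arctan_strictMono.monotone this
  linarith

lemma vRat_zero (a : ℝ) : vRat a 0 = 0 := by simp [vRat]

lemma vRat_neg (a x : ℝ) : vRat a (-x) = - vRat a x := by
  simp [vRat, neg_div]

lemma vRat_lip {a : ℝ} (ha : 0 < a) {x y : ℝ} (h : x ≤ y) :
    vRat a y - vRat a x ≤ 2 / a * (y - x) := by
  have hd : x / a ≤ y / a := by gcongr
  have h1 : Real.arctan (y/a) - Real.arctan (x/a) ≤ y/a - x/a := by
    have h2 := arctan_lipschitz.dist_le_mul (y/a) (x/a)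
    simp only [NNReal.coe_one, one_mul, Real.dist_eq] at h2
    calc Real.arctan (y/a) - Real.arctan (x/a)
        ≤ |Real.arctan (y/a) - Real.arctan (x/a)| := le_abs_self _
      _ ≤ |y/a - x/a| := h2
      _ = y/a - x/a := abs_of_nonneg (by linarith)
  have h3 : 2 / a * (y - x) = 2 * (y/a - x/a) := by field_simp
  unfold vRat
  linarith

noncomputable def sumV (K : ℕ) (a : Fin K → ℝ) (y : ℝ) : ℝ := ∑ k, vRat (a k) y

noncomputable def pairG (L : ℕ) (b : Fin L → ℝ) (x y : ℝ) : ℝ :=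
  ∑ l, (vRat (b l) (x + y) - vRat (b l) (x - y))

variable {K L : ℕ} {a : Fin K → ℝ} {b : Fin L → ℝ}

lemma sumV_zero : sumV K a 0 = 0 := by simp [sumV, vRat_zero]

lemma sumV_mono (ha : ∀ k, 0 < a k) {x y : ℝ} (h : x ≤ y) : sumV K a x ≤ sumV K a y :=
  Finset.sum_le_sum fun k _ => vRat_mono (ha k) h

lemma sumV_lip (ha : ∀ k, 0 < a k) {x y : ℝ} (h : x ≤ y) :
    sumV K a y - sumV K a x ≤ 2 * (∑ k, (a k)⁻¹) * (y - x) := by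
  have h1 : sumV K a y - sumV K a x = ∑ k, (vRat (a k) y - vRat (a k) x) := by
    rw [sumV, sumV, Finset.sum_sub_distrib]
  rw [h1]
  calc ∑ k, (vRat (a k) y - vRat (a k) x) ≤ ∑ k, 2 * (a k)⁻¹ * (y - x) :=
        Finset.sum_le_sum fun k _ => by
          have h2 := vRat_lip (ha k) h; rw [div_eq_mul_inv] at h2; exact h2
    _ = 2 * (∑ k, (a k)⁻¹) * (y - x) := by
        rw [Finset.mul_sum, Finset.sum_mul]

lemma pairG_zero (t : ℝ) : pairG L b t 0 = 0 := by simp [pairG]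

lemma pairG_mono (hb : ∀ l, 0 < b l) (t : ℝ) {x y : ℝ} (h : x ≤ y) :
    pairG L b t x ≤ pairG L b t y := by
  apply Finset.sum_le_sum
  intro l _
  have h1 := vRat_mono (hb l) (by linarith : t + x ≤ t + y)
  have h2 := vRat_mono (hb l) (by linarith : t - y ≤ t - x)
  linarith

lemma pairG_lip (hb : ∀ l, 0 < b l) (t : ℝ) {x y : ℝ} (h : x ≤ y) :
    pairG L b t y - pairG L b t x ≤ 4 * (∑ l, (b l)⁻¹) * (y - x) := by
  have h1 : pairG L b t y - pairG L b t x
      = ∑ l, ((vRat (b l) (t + y) - vRat (b l) (t + x))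
          + (vRat (b l) (t - x) - vRat (b l) (t - y))) := by
    rw [pairG, pairG, ← Finset.sum_sub_distrib]
    exact Finset.sum_congr rfl fun l _ => by ring
  rw [h1]
  calc ∑ l, ((vRat (b l) (t + y) - vRat (b l) (t + x))
          + (vRat (b l) (t - x) - vRat (b l) (t - y)))
      ≤ ∑ l, 4 * (b l)⁻¹ * (y - x) := Finset.sum_le_sum fun l _ => by
        have h2 := vRat_lip (hb l) (by linarith : t + x ≤ t + y)
        have h3 := vRat_lip (hb l) (by linarith : t - y ≤ t - x)
        rw [div_eq_mul_inv] at h2 h3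
        have e2 : t + y - (t + x) = y - x := by ring
        have e3 : t - x - (t - y) = y - x := by ring
        rw [e2] at h2; rw [e3] at h3
        linarith
    _ = 4 * (∑ l, (b l)⁻¹) * (y - x) := by rw [Finset.mul_sum, Finset.sum_mul]

lemma pairG_cross (x y : ℝ) :
    pairG L b x y - pairG L b y x = 2 * sumV L b (y - x) := by
  rw [pairG, pairG, sumV, ← Finset.sum_sub_distrib, Finset.mul_sum]
  apply Finset.sum_congr rfl
  intro l _
  have h1 : vRat (b l) (x - y) = - vRat (b l) (y - x) := by
    rw [show x - y = -(y - x) by ring, vRat_neg]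
  have h2 : y + x = x + y := by ring
  rw [h2, h1]; ring

/-- Rational Bethe bounds of type B: estimates for the solutions of the rational
type B critical-point system; in particular `ξ_1 > ξ_2 > ⋯ > ξ_n > 0`. -/
theorem ratB_bounds
    (n K L : ℕ) (hn : 1 ≤ n)
    (α : ℝ) (hα : 0 < α) (ε : ℕ) (hε : ε = 0 ∨ ε = 1)
    (a : Fin K → ℝ) (b : Fin L → ℝ)
    (ha : ∀ k, 0 < a k) (hb : ∀ l, 0 < b l)
    (μ : Fin n → ℤ) (hμ : ∀ j j' : Fin n, j < j' → μ j' < μ j)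
    (hμpos : ∀ j, 0 < μ j)
    (ξ : Fin n → ℝ)
    (hξ : ∀ j : Fin n,
      2 * α * ξ j + (∑ k, vRat (a k) (ξ j)) +
      (∑ j' ∈ Finset.univ.erase j, ∑ l,
        (vRat (b l) (ξ j' + ξ j) - vRat (b l) (ξ j' - ξ j)))
      = 2 * π * ((μ j : ℝ) + (ε : ℝ) / 2))
    (κ : ℝ)
    (hκ : κ = (∑ k, (a k)⁻¹) + 2 * ((n : ℝ) - 1) * (∑ l, (b l)⁻¹)) :
    (∀ j : Fin n,
      π * ((μ j : ℝ) + (ε : ℝ) / 2) / (α + κ) ≤ ξ j ∧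
      ξ j ≤ π * ((μ j : ℝ) + (ε : ℝ) / 2) / α) ∧
    (∀ j j' : Fin n, j < j' →
      π * ((μ j : ℝ) - (μ j' : ℝ)) / (α + κ) ≤ ξ j - ξ j' ∧
      ξ j - ξ j' ≤ π * ((μ j : ℝ) - (μ j' : ℝ)) / α) ∧
    (∀ j j' : Fin n, j < j' → ξ j' < ξ j) ∧ (∀ j : Fin n, 0 < ξ j) := by
  have hπ := Real.pi_pos
  have hSA0 : 0 ≤ ∑ k, (a k)⁻¹ := Finset.sum_nonneg fun k _ => (inv_pos.2 (ha k)).le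
  have hSB0 : 0 ≤ ∑ l, (b l)⁻¹ := Finset.sum_nonneg fun l _ => (inv_pos.2 (hb l)).le
  have hn1 : (1:ℝ) ≤ (n:ℝ) := by exact_mod_cast hn
  have hκ0 : 0 ≤ κ := by rw [hκ]; nlinarith
  have hακ : 0 < α + κ := by linarith
  have hEq : ∀ j, 2 * α * ξ j + sumV K a (ξ j)
      + ∑ m ∈ Finset.univ.erase j, pairG L b (ξ m) (ξ j)
      = 2 * π * ((μ j : ℝ) + (ε : ℝ) / 2) := fun j => hξ j
  have hμ1 : ∀ j, (1:ℝ) ≤ (μ j : ℝ) := fun j => by exact_mod_cast hμpos j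
  have hε0 : (0:ℝ) ≤ (ε:ℝ) := by positivity
  have hcard : ∀ j : Fin n, ((Finset.univ.erase j).card : ℝ) = (n:ℝ) - 1 := by
    intro j
    rw [Finset.card_erase_of_mem (Finset.mem_univ j), Finset.card_univ, Fintype.card_fin,
      Nat.cast_sub hn]
    norm_num
  -- positivity
  have hpos : ∀ j, 0 < ξ j := by
    intro j
    by_contra hcon
    push_neg at hcon
    have h1 : sumV K a (ξ j) ≤ 0 := by
      have h := sumV_mono ha hcon; rwa [sumV_zero] at h
    have h2 : ∑ m ∈ Finset.univ.erase j, pairG L b (ξ m) (ξ j) ≤ 0 :=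
      Finset.sum_nonpos fun m _ => by
        have h := pairG_mono hb (ξ m) hcon; rwa [pairG_zero] at h
    have h3 := hEq j
    have h4 : 2 * α * ξ j ≤ 0 := mul_nonpos_of_nonneg_of_nonpos (by linarith) hcon
    have h5 : (0:ℝ) < (μ j:ℝ) + (ε:ℝ)/2 := by linarith [hμ1 j]
    have h6 : 0 < 2 * π * ((μ j:ℝ) + (ε:ℝ)/2) := by positivity
    linarith
  -- single bounds
  have hsingle : ∀ j : Fin n,
      π * ((μ j : ℝ) + (ε : ℝ) / 2) / (α + κ) ≤ ξ j ∧
      ξ j ≤ π * ((μ j : ℝ) + (ε : ℝ) / 2) / α := by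
    intro j
    have hx : (0:ℝ) ≤ ξ j := (hpos j).le
    have hA1 : 0 ≤ sumV K a (ξ j) := by
      have h := sumV_mono ha hx; rwa [sumV_zero] at h
    have hA2 : sumV K a (ξ j) ≤ 2 * (∑ k, (a k)⁻¹) * ξ j := by
      have h := sumV_lip ha hx; rw [sumV_zero] at h; linarith
    have hG1 : 0 ≤ ∑ m ∈ Finset.univ.erase j, pairG L b (ξ m) (ξ j) :=
      Finset.sum_nonneg fun m _ => by
        have h := pairG_mono hb (ξ m) hx; rwa [pairG_zero] at h
    have hG2 : ∑ m ∈ Finset.univ.erase j, pairG L b (ξ m) (ξ j)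
        ≤ ((n:ℝ) - 1) * (4 * (∑ l, (b l)⁻¹) * ξ j) := by
      calc ∑ m ∈ Finset.univ.erase j, pairG L b (ξ m) (ξ j)
          ≤ (Finset.univ.erase j).card • (4 * (∑ l, (b l)⁻¹) * ξ j) :=
            Finset.sum_le_card_nsmul _ _ _ fun m _ => by
              have h := pairG_lip hb (ξ m) hx; rw [pairG_zero] at h
              simpa using h
        _ = ((n:ℝ) - 1) * (4 * (∑ l, (b l)⁻¹) * ξ j) := by
            rw [nsmul_eq_mul, hcard j]
    constructor
    · rw [div_le_iff₀ hακ]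
      have hk2 : 2 * α * ξ j + 2 * (∑ k, (a k)⁻¹) * ξ j
          + ((n:ℝ) - 1) * (4 * (∑ l, (b l)⁻¹) * ξ j) = 2 * (α + κ) * ξ j := by
        rw [hκ]; ring
      linarith [hEq j]
    · rw [le_div_iff₀ hα]
      linarith [hEq j]
  -- pair equation
  have hpairP : ∀ j j' : Fin n, j ≠ j' →
      2 * α * (ξ j - ξ j') + ((sumV K a (ξ j) - sumV K a (ξ j'))
        + (∑ m ∈ (Finset.univ.erase j).erase j',
            (pairG L b (ξ m) (ξ j) - pairG L b (ξ m) (ξ j')))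
        + 2 * sumV L b (ξ j - ξ j'))
      = 2 * π * ((μ j : ℝ) - (μ j' : ℝ)) := by
    intro j j' hne
    have hj' : j' ∈ Finset.univ.erase j := Finset.mem_erase.2 ⟨hne.symm, Finset.mem_univ _⟩
    have hj : j ∈ Finset.univ.erase j' := Finset.mem_erase.2 ⟨hne, Finset.mem_univ _⟩
    have e1 := Finset.sum_erase_add (Finset.univ.erase j)
      (fun m => pairG L b (ξ m) (ξ j)) hj'
    have e2 := Finset.sum_erase_add (Finset.univ.erase j')
      (fun m => pairG L b (ξ m) (ξ j')) hj
    have e3 : (Finset.univ.erase j').erase j = (Finset.univ.erase j).erase j' := by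
      ext m; simp only [Finset.mem_erase, Finset.mem_univ, and_true]; tauto
    rw [e3] at e2
    have e4 : ∑ m ∈ (Finset.univ.erase j).erase j',
        (pairG L b (ξ m) (ξ j) - pairG L b (ξ m) (ξ j'))
        = (∑ m ∈ (Finset.univ.erase j).erase j', pairG L b (ξ m) (ξ j))
          - (∑ m ∈ (Finset.univ.erase j).erase j', pairG L b (ξ m) (ξ j')) :=
      Finset.sum_sub_distrib _ _
    have e5 := pairG_cross (L := L) (b := b) (ξ j') (ξ j)
    have hEj := hEq j
    have hEj' := hEq j'
    rw [← e1] at hEj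
    rw [← e2] at hEj'
    have e6 : 2*π*((μ j:ℝ)+(ε:ℝ)/2) - 2*π*((μ j':ℝ)+(ε:ℝ)/2)
        = 2*π*((μ j:ℝ) - (μ j':ℝ)) := by ring
    linarith
  -- ordering
  have hord : ∀ j j' : Fin n, j < j' → ξ j' < ξ j := by
    intro j j' hlt
    by_contra hcon
    push_neg at hcon
    have hP := hpairP j j' (Fin.ne_of_lt hlt)
    have hΔ : (1:ℝ) ≤ (μ j:ℝ) - (μ j':ℝ) := by
      have h7 : μ j' + 1 ≤ μ j := hμ j j' hlt
      have : ((μ j' : ℝ) + 1 ≤ (μ j : ℝ)) := by exact_mod_cast h7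
      linarith
    have h1 : sumV K a (ξ j) - sumV K a (ξ j') ≤ 0 := by linarith [sumV_mono ha hcon]
    have h2 : ∑ m ∈ (Finset.univ.erase j).erase j',
        (pairG L b (ξ m) (ξ j) - pairG L b (ξ m) (ξ j')) ≤ 0 :=
      Finset.sum_nonpos fun m _ => by linarith [pairG_mono hb (ξ m) hcon]
    have h3 : 2 * sumV L b (ξ j - ξ j') ≤ 0 := by
      have h := sumV_mono hb (show ξ j - ξ j' ≤ (0:ℝ) by linarith)
      rw [sumV_zero] at h; linarith
    have h4 : 0 < 2*π*((μ j:ℝ)-(μ j':ℝ)) := by nlinarith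
    have h5 : 2*α*(ξ j - ξ j') ≤ 0 := by nlinarith
    linarith
  -- pair bounds
  have hpairB : ∀ j j' : Fin n, j < j' →
      π * ((μ j : ℝ) - (μ j' : ℝ)) / (α + κ) ≤ ξ j - ξ j' ∧
      ξ j - ξ j' ≤ π * ((μ j : ℝ) - (μ j' : ℝ)) / α := by
    intro j j' hlt
    have hδ : (0:ℝ) ≤ ξ j - ξ j' := by linarith [hord j j' hlt]
    have hle : ξ j' ≤ ξ j := by linarith
    have hP := hpairP j j' (Fin.ne_of_lt hlt)
    have hn2 : 2 ≤ n := by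
      have hv : (j : ℕ) < (j' : ℕ) := hlt
      have := j'.isLt
      omega
    have hj' : j' ∈ Finset.univ.erase j :=
      Finset.mem_erase.2 ⟨(Fin.ne_of_lt hlt).symm, Finset.mem_univ _⟩
    have hcardS : (((Finset.univ.erase j).erase j').card : ℝ) = (n:ℝ) - 2 := by
      rw [Finset.card_erase_of_mem hj', Finset.card_erase_of_mem (Finset.mem_univ j),
        Finset.card_univ, Fintype.card_fin, Nat.cast_sub (by omega : 1 ≤ n - 1),
        Nat.cast_sub hn]
      push_cast
      ring
    have hA1 : 0 ≤ sumV K a (ξ j) - sumV K a (ξ j') := by linarith [sumV_mono ha hle]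
    have hA2 : sumV K a (ξ j) - sumV K a (ξ j') ≤ 2 * (∑ k, (a k)⁻¹) * (ξ j - ξ j') :=
      sumV_lip ha hle
    have hG1 : 0 ≤ ∑ m ∈ (Finset.univ.erase j).erase j',
        (pairG L b (ξ m) (ξ j) - pairG L b (ξ m) (ξ j')) :=
      Finset.sum_nonneg fun m _ => by linarith [pairG_mono hb (ξ m) hle]
    have hG2 : ∑ m ∈ (Finset.univ.erase j).erase j',
        (pairG L b (ξ m) (ξ j) - pairG L b (ξ m) (ξ j'))
        ≤ ((n:ℝ) - 2) * (4 * (∑ l, (b l)⁻¹) * (ξ j - ξ j')) := by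
      calc ∑ m ∈ (Finset.univ.erase j).erase j',
          (pairG L b (ξ m) (ξ j) - pairG L b (ξ m) (ξ j'))
          ≤ ((Finset.univ.erase j).erase j').card
              • (4 * (∑ l, (b l)⁻¹) * (ξ j - ξ j')) :=
            Finset.sum_le_card_nsmul _ _ _ fun m _ => pairG_lip hb (ξ m) hle
        _ = ((n:ℝ) - 2) * (4 * (∑ l, (b l)⁻¹) * (ξ j - ξ j')) := by
            rw [nsmul_eq_mul, hcardS]
    have hC1 : 0 ≤ 2 * sumV L b (ξ j - ξ j') := by
      have h := sumV_mono hb hδ; rw [sumV_zero] at h; linarith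
    have hC2 : 2 * sumV L b (ξ j - ξ j') ≤ 4 * (∑ l, (b l)⁻¹) * (ξ j - ξ j') := by
      have h := sumV_lip hb hδ; rw [sumV_zero] at h
      have h' : sumV L b (ξ j - ξ j') ≤ 2 * (∑ l, (b l)⁻¹) * (ξ j - ξ j') := by
        simpa using h
      linarith
    constructor
    · rw [div_le_iff₀ hακ]
      have hk2 : 2 * α * (ξ j - ξ j') + 2 * (∑ k, (a k)⁻¹) * (ξ j - ξ j')
          + ((n:ℝ) - 2) * (4 * (∑ l, (b l)⁻¹) * (ξ j - ξ j'))
          + 4 * (∑ l, (b l)⁻¹) * (ξ j - ξ j') = 2 * (α + κ) * (ξ j - ξ j') := by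
        rw [hκ]; ring
      linarith
    · rw [le_div_iff₀ hα]
      linarith
  exact ⟨hsingle, hpairB, hord, hpos⟩
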